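/- Let q > 0 be real and let n ≥ 0. For a strictly increasing integer sequence 0 = a_0 < a_1 < ⋯ < a_n define the q-weighted partition function W(a; q) := Σ over all t = 0 touching-path configurations with endpoints (a_0,…,a_n) of q^{Σ_e j(e)·m(e)}, where the sum in the exponent runs over the vertical edges e of the grid, j(e) is the x-coordinate of e, and m(e) is its multiplicity. Then for any two such sequences (a_0,…,a_n) and (a'_0,…,a'_n): W(a; q) · Δ(q^{a'_0}, q^{a'_1+1}, …, q^{a'_n+n}) = W(a'; q) · Δ(q^{a_0}, q^{a_1+1}, …, q^{a_n+n}), where Δ(y_0,…,y_n) = ∏_{0 ≤ i < j ≤ n}(y_j − y_i). (Equivalently, W(a; q) = q^{c_n} · Δ(q^{a_0}, q^{a_1+1}, …, q^{a_n+n}) / Δ(1, q, …, q^n) for a constant c_n independent of the a_i.) -/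

import Mathlib

open Finset

/-- A t = 0 touching-path configuration with endpoints `(a_0,…,a_n)` on the grid
`{0,…,a_n} × {−n,…,0}`: edge multiplicities satisfying conservation at every vertex,
horizontal multiplicities at most 1, multiplicity 1 on each incoming west boundary edge,
0 on the east and south boundary edges, and 1 on the outgoing north boundary edge exactly
at the columns `a_0, …, a_n`. -/
def TouchingConfig (n : ℕ) (a : Fin (n + 1) → ℕ)
    (c : (Fin (n + 1) → Fin (a (Fin.last n) + 2) → ℕ) ×
         (Fin (n + 2) → Fin (a (Fin.last n) + 1) → ℕ)) : Prop :=
  (∀ (r : Fin (n + 1)) (j : Fin (a (Fin.last n) + 1)),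
      c.1 r j.castSucc + c.2 r.castSucc j = c.1 r j.succ + c.2 r.succ j) ∧
  (∀ (r : Fin (n + 1)) (j : Fin (a (Fin.last n) + 2)), c.1 r j ≤ 1) ∧
  (∀ r : Fin (n + 1), c.1 r 0 = 1) ∧
  (∀ r : Fin (n + 1), c.1 r (Fin.last (a (Fin.last n) + 1)) = 0) ∧
  (∀ j : Fin (a (Fin.last n) + 1), c.2 0 j = 0) ∧
  (∀ j : Fin (a (Fin.last n) + 1),
      c.2 (Fin.last (n + 1)) j = if ∃ i, a i = (j : ℕ) then 1 else 0)

/-- The q-weighted partition function `W(a; q)`: the sum over all t = 0 touching-path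
configurations with endpoints `(a_0,…,a_n)` of `q^{Σ_e j(e)·m(e)}`, the sum in the
exponent running over the (interior) vertical edges `e` of the grid, `j(e)` being the
x-coordinate of the edge and `m(e)` its multiplicity. -/
noncomputable def qTouchingZ (n : ℕ) (a : Fin (n + 1) → ℕ) (q : ℝ) : ℝ :=
  ∑ᶠ c : {c : (Fin (n + 1) → Fin (a (Fin.last n) + 2) → ℕ) ×
      (Fin (n + 2) → Fin (a (Fin.last n) + 1) → ℕ) // TouchingConfig n a c},
    q ^ ∑ r : Fin n, ∑ j : Fin (a (Fin.last n) + 1),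
      (j : ℕ) * c.1.2 r.succ.castSucc j


namespace TPaux

open Matrix

lemma geom_icc (r : ℝ) (a b : ℕ) (hab : a ≤ b + 1) :
    (∑ x ∈ Finset.Icc a b, r ^ x) * (r - 1) = r ^ (b + 1) - r ^ a := by
  rcases eq_or_lt_of_le hab with h | h
  · have hh : ¬ a ≤ b := by omega
    rw [Finset.Icc_eq_empty hh]
    simp [h]
  · have h1 : ∑ x ∈ Finset.Icc a b, r ^ x = ∑ i ∈ range (b + 1 - a), r ^ a * r ^ i := by
      refine Finset.sum_nbij' (fun x => x - a) (fun i => a + i) ?_ ?_ ?_ ?_ ?_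
      all_goals intro x hx
      all_goals simp only [Finset.mem_Icc, Finset.mem_range] at hx ⊢
      all_goals try omega
      rw [← pow_add]
      congr 1
      omega
    rw [h1, ← Finset.mul_sum, mul_assoc, geom_sum_mul, mul_sub, ← pow_add, mul_one]
    congr 2
    omega

/-- reindexing double products over pairs: Fin/Ioi form to range form -/
lemma prod_Ioi_eq_range {m : ℕ} (f : ℕ → ℕ → ℝ) :
    (∏ i : Fin m, ∏ j ∈ Finset.Ioi i, f (i : ℕ) (j : ℕ))
      = ∏ j ∈ range m, ∏ i ∈ range j, f i j := by
  rw [Finset.prod_sigma' (univ : Finset (Fin m)) (fun i => Finset.Ioi i)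
      (fun i j => f (i : ℕ) (j : ℕ)),
    Finset.prod_sigma' (range m) (fun j => range j) (fun j i => f i j)]
  refine (Finset.prod_bij (fun (p : Σ _ : ℕ, ℕ) (hp : p ∈ (range m).sigma fun j => range j) =>
      (⟨⟨p.2, ?_⟩, ⟨p.1, ?_⟩⟩ : Σ _ : Fin m, Fin m)) ?_ ?_ ?_ ?_).symm
  · simp only [Finset.mem_sigma, Finset.mem_range] at hp; omega
  · simp only [Finset.mem_sigma, Finset.mem_range] at hp; omega
  · intro p hp
    simp only [Finset.mem_sigma, Finset.mem_range, Finset.mem_univ, Finset.mem_Ioi] at hp ⊢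
    refine ⟨trivial, ?_⟩
    simp only [Fin.mk_lt_mk, Fin.lt_def]
    exact hp.2
  · rintro ⟨x, y⟩ hp ⟨x', y'⟩ hp' h
    have h1 := congrArg (fun z : Σ _ : Fin m, Fin m => (z.1 : ℕ)) h
    have h2 := congrArg (fun z : Σ _ : Fin m, Fin m => (z.2 : ℕ)) h
    simp only at h1 h2
    subst h1; subst h2; rfl
  · rintro ⟨b1, b2⟩ hb
    simp only [Finset.mem_sigma, Finset.mem_univ, Finset.mem_Ioi] at hb
    refine ⟨⟨(b2 : ℕ), (b1 : ℕ)⟩, ?_, ?_⟩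
    · simp only [Finset.mem_sigma, Finset.mem_range]
      exact ⟨b2.isLt, hb.2⟩
    · simp
  · intro p hp
    rfl

end TPaux

namespace TPaux
open Matrix

lemma key_det {m : ℕ} (y : Fin (m + 1) → ℝ) :
    Matrix.det (Matrix.of fun i j : Fin m =>
        y i.succ ^ ((j : ℕ) + 1) - y i.castSucc ^ ((j : ℕ) + 1))
      = ∏ i : Fin (m + 1), ∏ j ∈ Finset.Ioi i, (y j - y i) := by
  set R : Matrix (Fin (m + 1)) (Fin (m + 1)) ℝ :=
    Matrix.of (fun k j => Fin.cases (y 0 ^ (j : ℕ))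
      (fun k' => y k'.succ ^ (j : ℕ) - y k'.castSucc ^ (j : ℕ)) k) with hR
  set E : Matrix (Fin (m + 1)) (Fin (m + 1)) ℝ :=
    Matrix.of (fun k l => if l ≤ k then (1 : ℝ) else 0) with hE
  have hsum : ∀ (j : Fin (m + 1)) (k : Fin (m + 1)),
      ∑ l ∈ Finset.univ.filter (fun l => l ≤ k), R l j = y k ^ (j : ℕ) := by
    intro j k
    induction k using Fin.induction with
    | zero =>
      have : Finset.univ.filter (fun l : Fin (m + 1) => l ≤ 0) = {0} := by
        ext l
        simp [Fin.le_zero_iff]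
      rw [this, Finset.sum_singleton]
      simp [hR]
    | succ k ih =>
      have hsplit : Finset.univ.filter (fun l : Fin (m + 1) => l ≤ k.succ)
          = insert k.succ (Finset.univ.filter (fun l => l ≤ k.castSucc)) := by
        ext l
        simp only [Finset.mem_filter, Finset.mem_univ, true_and, Finset.mem_insert,
          Fin.le_def, Fin.ext_iff, Fin.val_succ, Fin.coe_castSucc]
        omega
      have hnot : k.succ ∉ Finset.univ.filter (fun l : Fin (m + 1) => l ≤ k.castSucc) := by
        simp only [Finset.mem_filter, Finset.mem_univ, true_and, Fin.le_def,
          Fin.val_succ, Fin.coe_castSucc]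
        omega
      rw [hsplit, Finset.sum_insert hnot, ih]
      simp only [hR, Matrix.of_apply, Fin.cases_succ]
      ring
  have hER : E * R = Matrix.vandermonde y := by
    ext k j
    rw [Matrix.mul_apply]
    have h1 : ∀ l, E k l * R l j = if l ≤ k then R l j else 0 := by
      intro l
      by_cases h : l ≤ k <;> simp [hE, h]
    rw [Finset.sum_congr rfl fun l _ => h1 l, ← Finset.sum_filter, hsum]
    rfl
  have hdetE : E.det = 1 := by
    have : E.BlockTriangular OrderDual.toDual := by
      intro i j hij
      simp only [OrderDual.toDual_lt_toDual] at hij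
      simp only [hE, Matrix.of_apply, if_neg (not_le.mpr hij)]
    rw [Matrix.det_of_lowerTriangular E this]
    simp [hE]
  have hdetR : R.det = Matrix.det (Matrix.vandermonde y) := by
    rw [← hER, Matrix.det_mul, hdetE, one_mul]
  have hexp : R.det = Matrix.det (Matrix.of fun i j : Fin m =>
      y i.succ ^ ((j : ℕ) + 1) - y i.castSucc ^ ((j : ℕ) + 1)) := by
    rw [Matrix.det_succ_column_zero]
    have hzero : ∀ i ∈ (Finset.univ : Finset (Fin (m + 1))), i ≠ 0 →
        (-1 : ℝ) ^ (i : ℕ) * R i 0 * (R.submatrix i.succAbove Fin.succ).det = 0 := by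
      intro i _ hi
      obtain ⟨k', rfl⟩ := Fin.exists_succ_eq.mpr hi
      have h0 : R k'.succ 0 = 0 := by simp [hR]
      rw [h0, mul_zero, zero_mul]
    rw [Finset.sum_eq_single_of_mem 0 (Finset.mem_univ 0) hzero]
    simp only [Fin.val_zero, pow_zero, one_mul, Fin.succAbove_zero]
    have hR00 : R 0 0 = 1 := by simp [hR]
    rw [hR00, one_mul]
    have : R.submatrix Fin.succ Fin.succ = Matrix.of fun i j : Fin m =>
        y i.succ ^ ((j : ℕ) + 1) - y i.castSucc ^ ((j : ℕ) + 1) := by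
      ext k j
      simp only [Matrix.submatrix_apply, hR, Matrix.of_apply, Fin.cases_succ, Fin.val_succ]
    rw [this]
  rw [← hexp, hdetR, Matrix.det_vandermonde]

end TPaux

namespace TPaux
open Matrix

/-- the Vandermonde-type product in range form -/
noncomputable def ND (q : ℝ) (m : ℕ) (μ : ℕ → ℕ) : ℝ :=
  ∏ j ∈ range m, ∏ i ∈ range j, (q ^ (μ j + j) - q ^ (μ i + i))

lemma branch (q : ℝ) (m : ℕ) (μ : ℕ → ℕ) (hmono : ∀ i, μ i ≤ μ (i + 1)) :
    (∑ ν ∈ Fintype.piFinset (fun i : Fin m => Finset.Icc (μ (i : ℕ)) (μ ((i : ℕ) + 1))),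
        q ^ (∑ i, ν i) * Matrix.det (Matrix.vandermonde fun i : Fin m => q ^ (ν i + (i : ℕ))))
      * (q ^ (m * (m - 1) / 2) * ∏ j ∈ range m, (q ^ (j + 1) - 1))
      = ND q (m + 1) μ := by
  classical
  set A : (i : Fin m) → Finset ℕ := fun i => Finset.Icc (μ (i : ℕ)) (μ ((i : ℕ) + 1)) with hA
  set g : (i : Fin m) → ℕ → (Fin m → ℝ) :=
    (fun i x => fun j => q ^ x * (q ^ (x + (i : ℕ))) ^ (j : ℕ)) with hg
  -- Step A : pull the weight into the determinant rows
  have stepA : ∀ ν : Fin m → ℕ,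
      q ^ (∑ i, ν i) * Matrix.det (Matrix.vandermonde fun i : Fin m => q ^ (ν i + (i : ℕ)))
        = Matrix.det (Matrix.of fun i j => g i (ν i) j) := by
    intro ν
    have h1 : (Matrix.of fun i j => g i (ν i) j)
        = Matrix.of (fun i j => (fun i : Fin m => q ^ (ν i)) i *
            (Matrix.vandermonde fun i : Fin m => q ^ (ν i + (i : ℕ))) i j) := rfl
    rw [h1, Matrix.det_mul_column, Finset.prod_pow_eq_pow_sum]
  -- Step B : exchange sum and determinant (multilinearity in the rows)
  have stepB : (∑ ν ∈ Fintype.piFinset A, Matrix.det (Matrix.of fun i j => g i (ν i) j))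
      = Matrix.det (Matrix.of fun i j => ∑ x ∈ A i, g i x j) := by
    have h := (Matrix.detRowAlternating (n := Fin m) (R := ℝ)).toMultilinearMap.map_sum_finset g A
    have h2 : (Matrix.of fun i j => ∑ x ∈ A i, g i x j) = (fun i => ∑ x ∈ A i, g i x) := by
      funext i j
      simp [Finset.sum_apply]
    rw [h2]
    calc ∑ ν ∈ Fintype.piFinset A, (Matrix.of fun i j => g i (ν i) j).det
        = ∑ r ∈ Fintype.piFinset A,
            (Matrix.detRowAlternating (n := Fin m) (R := ℝ)).toMultilinearMap
              (fun i => g i (r i)) := rfl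
      _ = (Matrix.detRowAlternating (n := Fin m) (R := ℝ)).toMultilinearMap
              (fun i => ∑ x ∈ A i, g i x) := h.symm
      _ = Matrix.det (fun i => ∑ x ∈ A i, g i x) := rfl
  -- Step C : scale rows and columns
  have hppow : (∏ i : Fin m, q ^ (i : ℕ)) = q ^ (m * (m - 1) / 2) := by
    rw [Finset.prod_pow_eq_pow_sum]
    congr 1
    rw [Fin.sum_univ_eq_sum_range (fun i => i) m]
    have := Finset.sum_range_id_mul_two m
    omega
  have hpprod : (∏ j : Fin m, (q ^ ((j : ℕ) + 1) - 1)) = ∏ j ∈ range m, (q ^ (j + 1) - 1) :=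
    Fin.prod_univ_eq_prod_range (fun j => q ^ (j + 1) - 1) m
  have hsplit : Matrix.det (Matrix.of fun i j : Fin m =>
        q ^ (i : ℕ) * ((q ^ ((j : ℕ) + 1) - 1) * ∑ x ∈ A i, g i x j))
      = q ^ (m * (m - 1) / 2) * ((∏ j ∈ range m, (q ^ (j + 1) - 1)) *
          Matrix.det (Matrix.of fun i j => ∑ x ∈ A i, g i x j)) := by
    have e1 : (Matrix.of fun i j : Fin m =>
          q ^ (i : ℕ) * ((q ^ ((j : ℕ) + 1) - 1) * ∑ x ∈ A i, g i x j))
        = Matrix.of (fun i j => (fun i : Fin m => q ^ (i : ℕ)) i *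
            (Matrix.of fun i j : Fin m => (q ^ ((j : ℕ) + 1) - 1) * ∑ x ∈ A i, g i x j) i j) := rfl
    have e2 : (Matrix.of fun i j : Fin m => (q ^ ((j : ℕ) + 1) - 1) * ∑ x ∈ A i, g i x j)
        = Matrix.of (fun i j => (fun j : Fin m => q ^ ((j : ℕ) + 1) - 1) j *
            (Matrix.of fun i j : Fin m => ∑ x ∈ A i, g i x j) i j) := rfl
    rw [e1, Matrix.det_mul_column, e2, Matrix.det_mul_row, hppow, hpprod]
  -- Step D : the entries after scaling
  set y : Fin (m + 1) → ℝ := (fun k => q ^ (μ (k : ℕ) + (k : ℕ))) with hy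
  have entry : ∀ i j : Fin m,
      q ^ (i : ℕ) * ((q ^ ((j : ℕ) + 1) - 1) * ∑ x ∈ A i, g i x j)
        = y i.succ ^ ((j : ℕ) + 1) - y i.castSucc ^ ((j : ℕ) + 1) := by
    intro i j
    have h1 : ∀ x : ℕ, g i x j = (q ^ ((j : ℕ) + 1)) ^ x * q ^ ((i : ℕ) * (j : ℕ)) := by
      intro x
      show q ^ x * (q ^ (x + (i : ℕ))) ^ (j : ℕ) = _
      rw [← pow_mul, ← pow_add, ← pow_mul, ← pow_add]
      congr 1
      ring
    have hS : ∑ x ∈ A i, g i x j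
        = (∑ x ∈ A i, (q ^ ((j : ℕ) + 1)) ^ x) * q ^ ((i : ℕ) * (j : ℕ)) := by
      rw [Finset.sum_mul]
      exact Finset.sum_congr rfl fun x _ => h1 x
    have h2 : (∑ x ∈ A i, (q ^ ((j : ℕ) + 1)) ^ x) * (q ^ ((j : ℕ) + 1) - 1)
        = (q ^ ((j : ℕ) + 1)) ^ (μ ((i : ℕ) + 1) + 1) - (q ^ ((j : ℕ) + 1)) ^ (μ (i : ℕ)) := by
      exact geom_icc _ _ _ (by have := hmono (i : ℕ); omega)
    have expand : q ^ (i : ℕ) * ((q ^ ((j : ℕ) + 1) - 1) *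
          ((∑ x ∈ A i, (q ^ ((j : ℕ) + 1)) ^ x) * q ^ ((i : ℕ) * (j : ℕ))))
        = ((∑ x ∈ A i, (q ^ ((j : ℕ) + 1)) ^ x) * (q ^ ((j : ℕ) + 1) - 1)) *
            (q ^ (i : ℕ) * q ^ ((i : ℕ) * (j : ℕ))) := by ring
    rw [hS, expand, h2, sub_mul]
    have hy1 : y i.succ ^ ((j : ℕ) + 1) = q ^ ((μ ((i : ℕ) + 1) + ((i : ℕ) + 1)) * ((j : ℕ) + 1)) := by
      rw [hy]
      simp only [Fin.val_succ]
      rw [← pow_mul]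
    have hy2 : y i.castSucc ^ ((j : ℕ) + 1) = q ^ ((μ (i : ℕ) + (i : ℕ)) * ((j : ℕ) + 1)) := by
      rw [hy]
      simp only [Fin.coe_castSucc]
      rw [← pow_mul]
    rw [hy1, hy2]
    congr 1
    · rw [← pow_add, ← pow_mul, ← pow_add]
      congr 1
      ring
    · rw [← pow_add, ← pow_mul, ← pow_add]
      congr 1
      ring
  -- assemble
  have main : (∑ ν ∈ Fintype.piFinset A,
      q ^ (∑ i, ν i) * Matrix.det (Matrix.vandermonde fun i : Fin m => q ^ (ν i + (i : ℕ))))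
      = Matrix.det (Matrix.of fun i j => ∑ x ∈ A i, g i x j) := by
    rw [Finset.sum_congr rfl fun ν _ => stepA ν, stepB]
  rw [main]
  have hD : Matrix.det (Matrix.of fun i j : Fin m =>
        q ^ (i : ℕ) * ((q ^ ((j : ℕ) + 1) - 1) * ∑ x ∈ A i, g i x j))
      = ND q (m + 1) μ := by
    have e3 : (Matrix.of fun i j : Fin m =>
          q ^ (i : ℕ) * ((q ^ ((j : ℕ) + 1) - 1) * ∑ x ∈ A i, g i x j))
        = Matrix.of (fun i j : Fin m =>
            y i.succ ^ ((j : ℕ) + 1) - y i.castSucc ^ ((j : ℕ) + 1)) := by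
      ext i j
      exact entry i j
    rw [e3, key_det y]
    rw [show (∏ i : Fin (m + 1), ∏ j ∈ Finset.Ioi i, (y j - y i))
        = ∏ i : Fin (m + 1), ∏ j ∈ Finset.Ioi i,
            ((fun s t : ℕ => q ^ (μ t + t) - q ^ (μ s + s)) (i : ℕ) (j : ℕ)) from rfl]
    rw [prod_Ioi_eq_range (fun s t : ℕ => q ^ (μ t + t) - q ^ (μ s + s))]
    rfl
  rw [← hD, hsplit]
  ring

end TPaux

namespace TPaux

variable {M : ℕ}

/-- partial sums of a profile -/
def psum (M : ℕ) (u : Fin (M + 1) → ℕ) (t : ℕ) : ℕ :=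
  ∑ k : Fin (M + 1), if (k : ℕ) < t then u k else 0

lemma psum_zero (u : Fin (M + 1) → ℕ) : psum M u 0 = 0 := by simp [psum]

lemma psum_succ (u : Fin (M + 1) → ℕ) (t : ℕ) (ht : t < M + 1) :
    psum M u (t + 1) = psum M u t + u ⟨t, ht⟩ := by
  unfold psum
  have h : ∀ k : Fin (M + 1), (if (k : ℕ) < t + 1 then u k else 0)
      = (if (k : ℕ) < t then u k else 0) + (if k = ⟨t, ht⟩ then u k else 0) := by
    intro k
    by_cases h2 : k = ⟨t, ht⟩
    · subst h2; simp
    · have hk : (k : ℕ) ≠ t := fun h => h2 (Fin.ext h)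
      by_cases h1 : (k : ℕ) < t
      · rw [if_pos (by omega : (k : ℕ) < t + 1), if_pos h1, if_neg h2, add_zero]
      · rw [if_neg (by omega : ¬ (k : ℕ) < t + 1), if_neg h1, if_neg h2, add_zero]
  rw [Finset.sum_congr rfl fun k _ => h k, Finset.sum_add_distrib,
    Finset.sum_ite_eq' Finset.univ (⟨t, ht⟩ : Fin (M + 1)) u]
  simp

lemma psum_mono (u : Fin (M + 1) → ℕ) {s t : ℕ} (h : s ≤ t) : psum M u s ≤ psum M u t :=
  Finset.sum_le_sum fun k _ => by split_ifs with h1 h2 <;> omega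

lemma psum_full (u : Fin (M + 1) → ℕ) (t : ℕ) (ht : M + 1 ≤ t) :
    psum M u t = ∑ k, u k :=
  Finset.sum_congr rfl fun k _ => if_pos (lt_of_lt_of_le k.isLt ht)

lemma card_val_lt (N x : ℕ) (hx : x ≤ N) :
    (Finset.univ.filter (fun j : Fin N => (j : ℕ) < x)).card = x := by
  have him : (Finset.univ.filter (fun j : Fin N => (j : ℕ) < x)).image Fin.val = range x := by
    ext t
    simp only [Finset.mem_image, Finset.mem_filter, Finset.mem_univ, true_and, Finset.mem_range]
    constructor
    · rintro ⟨j, hj, rfl⟩; exact hj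
    · intro ht; exact ⟨⟨t, by omega⟩, ht, rfl⟩
  rw [← Finset.card_image_of_injective _ Fin.val_injective, him, Finset.card_range]

lemma card_val_Ico (N a b : ℕ) (hb : b ≤ N) :
    (Finset.univ.filter (fun j : Fin N => a ≤ (j : ℕ) ∧ (j : ℕ) < b)).card = b - a := by
  have him : (Finset.univ.filter (fun j : Fin N => a ≤ (j : ℕ) ∧ (j : ℕ) < b)).image Fin.val
      = Finset.Ico a b := by
    ext t
    simp only [Finset.mem_image, Finset.mem_filter, Finset.mem_univ, true_and, Finset.mem_Ico]
    constructor
    · rintro ⟨j, hj, rfl⟩; exact hj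
    · intro ht; exact ⟨⟨t, by omega⟩, ⟨ht.1, ht.2⟩, rfl⟩
  rw [← Finset.card_image_of_injective _ Fin.val_injective, him, Nat.card_Ico]

lemma lt_card_filter_iff {N : ℕ} (p : Fin N → Prop) [DecidablePred p]
    (hp : ∀ j1 j2 : Fin N, j1 ≤ j2 → p j2 → p j1) (j : Fin N) :
    (j : ℕ) < (Finset.univ.filter p).card ↔ p j := by
  constructor
  · intro h
    by_contra hnp
    have hsub : Finset.univ.filter p ⊆ Finset.univ.filter (fun l : Fin N => (l : ℕ) < (j : ℕ)) := by
      intro l hl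
      simp only [Finset.mem_filter, Finset.mem_univ, true_and] at hl ⊢
      by_contra hlj
      exact hnp (hp j l (Fin.le_def.mpr (by omega)) hl)
    have hc := Finset.card_le_card hsub
    rw [card_val_lt N (j : ℕ) (le_of_lt j.isLt)] at hc
    omega
  · intro h
    have hsub : Finset.univ.filter (fun l : Fin N => (l : ℕ) < (j : ℕ) + 1)
        ⊆ Finset.univ.filter p := by
      intro l hl
      simp only [Finset.mem_filter, Finset.mem_univ, true_and] at hl ⊢
      exact hp l j (Fin.le_def.mpr (by omega)) h
    have hc := Finset.card_le_card hsub
    rw [card_val_lt N ((j : ℕ) + 1) j.isLt] at hc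
    omega

/-- the sorted parts of a profile -/
def partsF (M : ℕ) (u : Fin (M + 1) → ℕ) (i : ℕ) : ℕ :=
  (Finset.univ.filter (fun j : Fin (M + 1) => psum M u ((j : ℕ) + 1) ≤ i)).card

lemma lt_parts_iff (u : Fin (M + 1) → ℕ) (i : ℕ) (j : Fin (M + 1)) :
    (j : ℕ) < partsF M u i ↔ psum M u ((j : ℕ) + 1) ≤ i := by
  classical
  exact lt_card_filter_iff _ (fun j1 j2 h12 h2 =>
    le_trans (psum_mono u (by
      have := Fin.le_def.mp h12
      omega)) h2) j

lemma parts_mono (u : Fin (M + 1) → ℕ) {i i' : ℕ} (h : i ≤ i') :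
    partsF M u i ≤ partsF M u i' := by
  classical
  apply Finset.card_le_card
  intro j hj
  simp only [Finset.mem_filter, Finset.mem_univ, true_and] at hj ⊢
  omega

lemma parts_le (u : Fin (M + 1) → ℕ) {i : ℕ} (hi : i < psum M u (M + 1)) :
    partsF M u i ≤ M := by
  by_contra h
  push_neg at h
  have := (lt_parts_iff u i ⟨M, by omega⟩).mp (by simpa using h)
  simp only at this
  omega

lemma parts_eq_iff (u : Fin (M + 1) → ℕ) (i : ℕ) (j : Fin (M + 1)) :
    partsF M u i = (j : ℕ) ↔ (psum M u (j : ℕ) ≤ i ∧ i < psum M u ((j : ℕ) + 1)) := by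
  have h1 := lt_parts_iff u i j
  have hle : ((j : ℕ) ≤ partsF M u i ↔ psum M u (j : ℕ) ≤ i) := by
    rcases Nat.eq_zero_or_pos (j : ℕ) with h0 | h0
    · rw [h0]; simp [psum_zero]
    · have hj' := lt_parts_iff u i ⟨(j : ℕ) - 1, by omega⟩
      simp only at hj'
      rw [Nat.sub_add_cancel h0] at hj'
      constructor
      · intro h
        exact hj'.mp (by omega)
      · intro h
        have := hj'.mpr h
        omega
  constructor
  · intro h
    refine ⟨hle.mp (by omega), ?_⟩
    by_contra hc
    push_neg at hc
    have := h1.mpr hc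
    omega
  · rintro ⟨ha, hb⟩
    have h2 : (j : ℕ) ≤ partsF M u i := hle.mpr ha
    have h3 : ¬ (j : ℕ) < partsF M u i := fun hc => by
      have := h1.mp hc
      omega
    omega

/-- the profile of a tuple of parts -/
def profF (M m : ℕ) (ν : Fin m → ℕ) : Fin (M + 1) → ℕ :=
  fun j => (Finset.univ.filter (fun i : Fin m => ν i = (j : ℕ))).card

lemma psum_prof (m : ℕ) (ν : Fin m → ℕ) (hb : ∀ i, ν i ≤ M) (t : ℕ) :
    psum M (profF M m ν) t = (Finset.univ.filter (fun i : Fin m => ν i < t)).card := by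
  classical
  induction t with
  | zero => simp [psum_zero]
  | succ t ih =>
    by_cases ht : t < M + 1
    · rw [psum_succ _ t ht, ih]
      have hsplit : Finset.univ.filter (fun i : Fin m => ν i < t + 1)
          = Finset.univ.filter (fun i : Fin m => ν i < t)
            ∪ Finset.univ.filter (fun i : Fin m => ν i = t) := by
        ext i
        simp only [Finset.mem_union, Finset.mem_filter, Finset.mem_univ, true_and]
        omega
      rw [hsplit, Finset.card_union_of_disjoint]
      · rfl
      · rw [Finset.disjoint_left]
        intro i hi1 hi2
        simp only [Finset.mem_filter, Finset.mem_univ, true_and] at hi1 hi2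
        omega
    · have h1 : psum M (profF M m ν) (t + 1) = psum M (profF M m ν) t := by
        unfold psum
        apply Finset.sum_congr rfl
        intro k _
        have hk := k.isLt
        rw [if_pos (by omega : (k : ℕ) < t + 1), if_pos (by omega : (k : ℕ) < t)]
      rw [h1, ih]
      apply congrArg
      apply Finset.filter_congr
      intro i _
      have := hb i
      omega

lemma wt_prof (m : ℕ) (ν : Fin m → ℕ) (hb : ∀ i, ν i ≤ M) :
    ∑ j : Fin (M + 1), (j : ℕ) * profF M m ν j = ∑ i, ν i := by
  classical
  unfold profF
  have h1 : ∀ j : Fin (M + 1), (j : ℕ) * (Finset.univ.filter (fun i : Fin m => ν i = (j : ℕ))).card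
      = ∑ i : Fin m, (if ν i = (j : ℕ) then (j : ℕ) else 0) := by
    intro j
    rw [Finset.card_filter, Finset.mul_sum]
    apply Finset.sum_congr rfl
    intro i _
    split_ifs <;> omega
  rw [Finset.sum_congr rfl fun j _ => h1 j, Finset.sum_comm]
  apply Finset.sum_congr rfl
  intro i _
  rw [Finset.sum_eq_single (⟨ν i, by have := hb i; omega⟩ : Fin (M + 1))]
  · simp
  · intro j _ hj
    rw [if_neg]
    intro hc
    exact hj (Fin.ext hc.symm)
  · intro h
    exact absurd (Finset.mem_univ _) h

lemma parts_prof (m : ℕ) (ν : Fin m → ℕ) (hm : ∀ i1 i2 : Fin m, i1 ≤ i2 → ν i1 ≤ ν i2)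
    (hb : ∀ i, ν i ≤ M) (i : Fin m) : partsF M (profF M m ν) (i : ℕ) = ν i := by
  classical
  unfold partsF
  have hchar : ∀ j : Fin (M + 1),
      (psum M (profF M m ν) ((j : ℕ) + 1) ≤ (i : ℕ)) ↔ ((j : ℕ) < ν i) := by
    intro j
    rw [psum_prof m ν hb]
    constructor
    · intro h
      by_contra hc
      push_neg at hc
      have hsub : Finset.univ.filter (fun i2 : Fin m => (i2 : ℕ) < (i : ℕ) + 1)
          ⊆ Finset.univ.filter (fun i2 : Fin m => ν i2 < (j : ℕ) + 1) := by
        intro i2 h2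
        simp only [Finset.mem_filter, Finset.mem_univ, true_and] at h2 ⊢
        have h3 : i2 ≤ i := Fin.le_def.mpr (by omega)
        have := hm i2 i h3
        omega
      have hcard := Finset.card_le_card hsub
      rw [card_val_lt m ((i : ℕ) + 1) i.isLt] at hcard
      omega
    · intro h
      have hsub : Finset.univ.filter (fun i2 : Fin m => ν i2 < (j : ℕ) + 1)
          ⊆ Finset.univ.filter (fun i2 : Fin m => (i2 : ℕ) < (i : ℕ)) := by
        intro i2 h2
        simp only [Finset.mem_filter, Finset.mem_univ, true_and] at h2 ⊢
        by_contra hc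
        push_neg at hc
        have : ν i ≤ ν i2 := hm i i2 (Fin.le_def.mpr hc)
        omega
      have hcard := Finset.card_le_card hsub
      rw [card_val_lt m (i : ℕ) (le_of_lt i.isLt)] at hcard
      omega
  have hfc : Finset.univ.filter (fun j : Fin (M + 1) => psum M (profF M m ν) ((j : ℕ) + 1) ≤ (i : ℕ))
      = Finset.univ.filter (fun j : Fin (M + 1) => (j : ℕ) < ν i) :=
    Finset.filter_congr fun j _ => hchar j
  rw [hfc, card_val_lt (M + 1) (ν i) (by have := hb i; omega)]

lemma prof_parts (m : ℕ) (u : Fin (M + 1) → ℕ) (hu : psum M u (M + 1) = m) (j : Fin (M + 1)) :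
    profF M m (fun i : Fin m => partsF M u (i : ℕ)) j = u j := by
  classical
  unfold profF
  have hfc : Finset.univ.filter (fun i : Fin m => partsF M u (i : ℕ) = (j : ℕ))
      = Finset.univ.filter (fun i : Fin m =>
          psum M u (j : ℕ) ≤ (i : ℕ) ∧ (i : ℕ) < psum M u ((j : ℕ) + 1)) :=
    Finset.filter_congr fun i _ => parts_eq_iff u (i : ℕ) j
  have hb : psum M u ((j : ℕ) + 1) ≤ m := by
    rw [← hu]
    exact psum_mono u (by omega)
  rw [hfc, card_val_Ico m _ _ hb]
  have := psum_succ u (j : ℕ) j.isLt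
  rw [Fin.eta] at this
  omega

end TPaux
namespace TPaux
variable {M : ℕ}

def RowCond (M : ℕ) (w u : Fin (M + 1) → ℕ) : Prop :=
  (∀ t : ℕ, psum M w t ≤ psum M u t ∧ psum M u t ≤ psum M w t + 1) ∧
  psum M u (M + 1) = psum M w (M + 1) + 1

lemma interlace_fwd (w u : Fin (M + 1) → ℕ) (h : RowCond M w u) (i : ℕ) :
    partsF M u i ≤ partsF M w i ∧ partsF M w i ≤ partsF M u (i + 1) := by
  classical
  unfold partsF
  constructor
  · apply Finset.card_le_card
    intro j hj
    simp only [Finset.mem_filter, Finset.mem_univ, true_and] at hj ⊢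
    have := (h.1 ((j : ℕ) + 1)).1
    omega
  · apply Finset.card_le_card
    intro j hj
    simp only [Finset.mem_filter, Finset.mem_univ, true_and] at hj ⊢
    have := (h.1 ((j : ℕ) + 1)).2
    omega

lemma fin_mono_of_succ {m : ℕ} (f : Fin m → ℕ)
    (h : ∀ i : Fin m, ∀ hi : (i : ℕ) + 1 < m, f i ≤ f ⟨(i : ℕ) + 1, hi⟩) :
    ∀ i1 i2 : Fin m, i1 ≤ i2 → f i1 ≤ f i2 := by
  have key : ∀ d : ℕ, ∀ i1 i2 : Fin m, (i2 : ℕ) = (i1 : ℕ) + d → f i1 ≤ f i2 := by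
    intro d
    induction d with
    | zero =>
      intro i1 i2 h12
      have : i1 = i2 := Fin.ext (by omega)
      rw [this]
    | succ d ih =>
      intro i1 i2 h12
      have h2 : (i1 : ℕ) + d < m := by have := i2.isLt; omega
      have hmid : f i1 ≤ f ⟨(i1 : ℕ) + d, h2⟩ := ih i1 ⟨(i1 : ℕ) + d, h2⟩ rfl
      have h3 : ((⟨(i1 : ℕ) + d, h2⟩ : Fin m) : ℕ) + 1 < m := by
        simp only
        have := i2.isLt
        omega
      have hstep := h ⟨(i1 : ℕ) + d, h2⟩ h3
      have h4 : (⟨((⟨(i1 : ℕ) + d, h2⟩ : Fin m) : ℕ) + 1, h3⟩ : Fin m) = i2 := Fin.ext (by simp; omega)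
      rw [h4] at hstep
      exact le_trans hmid hstep
  intro i1 i2 h12
  exact key ((i2 : ℕ) - (i1 : ℕ)) i1 i2 (by have := Fin.le_def.mp h12; omega)

lemma interlace_bwd (m : ℕ) (u : Fin (M + 1) → ℕ) (hu : psum M u (M + 1) = m + 1)
    (ν : Fin m → ℕ)
    (hν : ∀ i : Fin m, partsF M u (i : ℕ) ≤ ν i ∧ ν i ≤ partsF M u ((i : ℕ) + 1)) :
    RowCond M (profF M m ν) u := by
  classical
  have hbnd : ∀ i : Fin m, ν i ≤ M := fun i =>
    le_trans (hν i).2 (parts_le u (by omega))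
  have hbu : ∀ i : Fin (m + 1), partsF M u (i : ℕ) ≤ M := fun i =>
    parts_le u (by have := i.isLt; omega)
  have hpu : ∀ t, psum M u t
      = (Finset.univ.filter (fun i : Fin (m + 1) => partsF M u (i : ℕ) < t)).card := by
    intro t
    have he : psum M u t
        = psum M (profF M (m + 1) (fun i : Fin (m + 1) => partsF M u (i : ℕ))) t := by
      unfold psum
      refine Finset.sum_congr rfl fun k _ => ?_
      by_cases hk : (k : ℕ) < t
      · rw [if_pos hk, if_pos hk, prof_parts (m + 1) u hu k]
      · rw [if_neg hk, if_neg hk]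
    rw [he, psum_prof (m + 1) _ hbu t]
  have hpw : ∀ t, psum M (profF M m ν) t
      = (Finset.univ.filter (fun i : Fin m => ν i < t)).card := psum_prof m ν hbnd
  constructor
  · intro t
    constructor
    · rw [hpu t, hpw t]
      apply Finset.card_le_card_of_injOn (fun i => Fin.castSucc i)
      · intro i hi
        simp only [Finset.mem_coe, Finset.mem_filter, Finset.mem_univ, true_and] at hi ⊢
        rw [Fin.coe_castSucc]
        have := (hν i).1
        omega
      · intro a _ b _ hab
        exact Fin.castSucc_injective m hab
    · rw [hpu t, hpw t]
      have hsub : Finset.univ.filter (fun i : Fin (m + 1) => partsF M u (i : ℕ) < t)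
          ⊆ insert (0 : Fin (m + 1))
            ((Finset.univ.filter (fun i : Fin m => ν i < t)).image Fin.succ) := by
        intro i hi
        simp only [Finset.mem_filter, Finset.mem_univ, true_and, Finset.mem_insert,
          Finset.mem_image] at hi ⊢
        by_cases h0 : i = 0
        · exact Or.inl h0
        · right
          obtain ⟨i', rfl⟩ := Fin.exists_succ_eq.mpr h0
          rw [Fin.val_succ] at hi
          have h2 := (hν i').2
          have h3 : (i'.succ : ℕ) = (i' : ℕ) + 1 := Fin.val_succ i'
          refine ⟨i', ?_, rfl⟩
          first
          | (simp only [Finset.mem_filter, Finset.mem_univ, true_and]; omega)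
          | omega
      have hc1 := Finset.card_le_card hsub
      have hc2 := Finset.card_insert_le (0 : Fin (m + 1))
        ((Finset.univ.filter (fun i : Fin m => ν i < t)).image Fin.succ)
      have hc3 := Finset.card_image_le
        (s := Finset.univ.filter (fun i : Fin m => ν i < t)) (f := Fin.succ)
      omega
  · rw [hpu (M + 1), hpw (M + 1)]
    have h1 : Finset.univ.filter (fun i : Fin (m + 1) => partsF M u (i : ℕ) < M + 1)
        = Finset.univ := Finset.filter_true_of_mem fun i _ => by have := hbu i; omega
    have h2 : Finset.univ.filter (fun i : Fin m => ν i < M + 1)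
        = Finset.univ := Finset.filter_true_of_mem fun i _ => by have := hbnd i; omega
    rw [h1, h2, Finset.card_univ, Finset.card_univ]
    simp

end TPaux
namespace TPaux

open scoped Classical

variable {M : ℕ}

def ConfigGen (M m : ℕ) (u : Fin (M + 1) → ℕ)
    (c : (Fin m → Fin (M + 2) → ℕ) × (Fin (m + 1) → Fin (M + 1) → ℕ)) : Prop :=
  (∀ (r : Fin m) (j : Fin (M + 1)),
      c.1 r j.castSucc + c.2 r.castSucc j = c.1 r j.succ + c.2 r.succ j) ∧
  (∀ (r : Fin m) (j : Fin (M + 2)), c.1 r j ≤ 1) ∧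
  (∀ r : Fin m, c.1 r 0 = 1) ∧
  (∀ r : Fin m, c.1 r (Fin.last (M + 1)) = 0) ∧
  (∀ j : Fin (M + 1), c.2 0 j = 0) ∧
  (∀ j : Fin (M + 1), c.2 (Fin.last m) j = u j)

def wtE (M m : ℕ) (c2 : Fin (m + 1) → Fin (M + 1) → ℕ) : ℕ :=
  ∑ r : Fin m, ∑ j : Fin (M + 1), (j : ℕ) * c2 r.castSucc j

noncomputable def bigC (M m : ℕ) :
    Finset ((Fin m → Fin (M + 2) → ℕ) × (Fin (m + 1) → Fin (M + 1) → ℕ)) :=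
  (Fintype.piFinset fun _ => Fintype.piFinset fun _ => Finset.range 2) ×ˢ
    (Fintype.piFinset fun _ => Fintype.piFinset fun _ => Finset.range (m + 2))

noncomputable def ZC (q : ℝ) (M m : ℕ) (u : Fin (M + 1) → ℕ) : ℝ :=
  ∑ c ∈ (bigC M m).filter (fun c => ConfigGen M m u c), q ^ wtE M m c.2

lemma entry_le_psum (x : Fin (M + 1) → ℕ) (j : Fin (M + 1)) : x j ≤ psum M x (M + 1) := by
  unfold psum
  have h := Finset.single_le_sum
    (f := fun k : Fin (M + 1) => if (k : ℕ) < M + 1 then x k else 0)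
    (fun k _ => Nat.zero_le _) (Finset.mem_univ j)
  simpa [j.isLt] using h

lemma level_total {m : ℕ} {u : Fin (M + 1) → ℕ}
    {c : (Fin m → Fin (M + 2) → ℕ) × (Fin (m + 1) → Fin (M + 1) → ℕ)}
    (hc : ConfigGen M m u c) :
    ∀ r : Fin (m + 1), psum M (c.2 r) (M + 1) = (r : ℕ) := by
  intro r
  induction r using Fin.induction with
  | zero =>
    rw [psum_full _ _ (le_refl _)]
    simp [hc.2.2.2.2.1]
  | succ r ih =>
    have hsum : ∑ j : Fin (M + 1), (c.1 r j.castSucc + c.2 r.castSucc j)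
        = ∑ j : Fin (M + 1), (c.1 r j.succ + c.2 r.succ j) :=
      Finset.sum_congr rfl fun j _ => hc.1 r j
    rw [Finset.sum_add_distrib, Finset.sum_add_distrib] at hsum
    have hcast : (∑ j : Fin (M + 1), c.1 r j.castSucc) + c.1 r (Fin.last (M + 1))
        = ∑ j : Fin (M + 2), c.1 r j := (Fin.sum_univ_castSucc (fun j => c.1 r j)).symm
    have hsucc : c.1 r 0 + ∑ j : Fin (M + 1), c.1 r j.succ
        = ∑ j : Fin (M + 2), c.1 r j := (Fin.sum_univ_succ (fun j => c.1 r j)).symm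
    have h0 := hc.2.2.1 r
    have hl := hc.2.2.2.1 r
    have hfull1 : psum M (c.2 r.castSucc) (M + 1) = ∑ j, c.2 r.castSucc j :=
      psum_full _ _ le_rfl
    have hfull2 : psum M (c.2 r.succ) (M + 1) = ∑ j, c.2 r.succ j :=
      psum_full _ _ le_rfl
    have hv : (r.succ : ℕ) = (r.castSucc : ℕ) + 1 := by
      simp [Fin.val_succ, Fin.coe_castSucc]
    omega

lemma last_row {m : ℕ} {u : Fin (M + 1) → ℕ}
    {c : (Fin (m + 1) → Fin (M + 2) → ℕ) × (Fin (m + 2) → Fin (M + 1) → ℕ)}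
    (hc : ConfigGen M (m + 1) u c) :
    ∀ t : ℕ, ∀ ht : t < M + 2,
      c.1 (Fin.last m) ⟨t, ht⟩ + psum M u t
        = 1 + psum M (c.2 (Fin.last m).castSucc) t := by
  have htop : c.2 (Fin.last m).succ = u := by
    rw [Fin.succ_last]
    funext j
    exact hc.2.2.2.2.2 j
  intro t
  induction t with
  | zero =>
    intro ht
    have h0 : (⟨0, ht⟩ : Fin (M + 2)) = 0 := rfl
    rw [h0, hc.2.2.1 (Fin.last m), psum_zero, psum_zero]
  | succ t ihh =>
    intro ht
    have ht' : t < M + 2 := by omega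
    have htM : t < M + 1 := by omega
    have hcons := hc.1 (Fin.last m) ⟨t, htM⟩
    have e1 : (⟨t, htM⟩ : Fin (M + 1)).castSucc = ⟨t, ht'⟩ := rfl
    have e2 : (⟨t, htM⟩ : Fin (M + 1)).succ = ⟨t + 1, ht⟩ := rfl
    rw [e1, e2, htop] at hcons
    have hu := psum_succ u t htM
    have hw := psum_succ (c.2 (Fin.last m).castSucc) t htM
    have := ihh ht'
    omega

lemma split_rowcond {m : ℕ} {u : Fin (M + 1) → ℕ}
    {c : (Fin (m + 1) → Fin (M + 2) → ℕ) × (Fin (m + 2) → Fin (M + 1) → ℕ)}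
    (hc : ConfigGen M (m + 1) u c) :
    RowCond M (c.2 (Fin.last m).castSucc) u := by
  have key : ∀ t : ℕ, t < M + 2 →
      psum M (c.2 (Fin.last m).castSucc) t ≤ psum M u t ∧
        psum M u t ≤ psum M (c.2 (Fin.last m).castSucc) t + 1 := by
    intro t ht
    have h := last_row hc t ht
    have hle := hc.2.1 (Fin.last m) ⟨t, ht⟩
    omega
  constructor
  · intro t
    rcases lt_or_ge t (M + 2) with ht | ht
    · exact key t ht
    · have h1 : psum M (c.2 (Fin.last m).castSucc) t
          = psum M (c.2 (Fin.last m).castSucc) (M + 1) := by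
        rw [psum_full _ _ (by omega), psum_full _ _ (by omega)]
      have h2 : psum M u t = psum M u (M + 1) := by
        rw [psum_full _ _ (by omega), psum_full _ _ (by omega)]
      rw [h1, h2]
      exact key (M + 1) (by omega)
  · have h := last_row hc (M + 1) (by omega)
    have hlast : (⟨M + 1, by omega⟩ : Fin (M + 2)) = Fin.last (M + 1) := rfl
    rw [hlast, hc.2.2.2.1 (Fin.last m)] at h
    omega

lemma h_unique {m : ℕ} {u : Fin (M + 1) → ℕ}
    {c : (Fin (m + 1) → Fin (M + 2) → ℕ) × (Fin (m + 2) → Fin (M + 1) → ℕ)}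
    (hc : ConfigGen M (m + 1) u c) (j : Fin (M + 2)) :
    c.1 (Fin.last m) j = 1 + psum M (c.2 (Fin.last m).castSucc) (j : ℕ) - psum M u (j : ℕ) := by
  have h := last_row hc (j : ℕ) j.isLt
  rw [Fin.eta] at h
  omega

def hrow (M : ℕ) (w u : Fin (M + 1) → ℕ) : Fin (M + 2) → ℕ :=
  fun j => 1 + psum M w (j : ℕ) - psum M u (j : ℕ)

lemma hrow_zero {w u : Fin (M + 1) → ℕ} : hrow M w u 0 = 1 := by
  unfold hrow
  rw [show ((0 : Fin (M + 2)) : ℕ) = 0 from rfl, psum_zero, psum_zero]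

lemma hrow_le {w u : Fin (M + 1) → ℕ} (hR : RowCond M w u) (j : Fin (M + 2)) :
    hrow M w u j ≤ 1 := by
  have := (hR.1 (j : ℕ)).1
  unfold hrow
  omega

lemma hrow_last {w u : Fin (M + 1) → ℕ} (hR : RowCond M w u) :
    hrow M w u (Fin.last (M + 1)) = 0 := by
  have := hR.2
  unfold hrow
  rw [show ((Fin.last (M + 1)) : ℕ) = M + 1 from rfl]
  omega

lemma hrow_cons {w u : Fin (M + 1) → ℕ} (hR : RowCond M w u) (j : Fin (M + 1)) :
    hrow M w u j.castSucc + w j = hrow M w u j.succ + u j := by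
  have h1 := (hR.1 (j : ℕ)).1
  have h2 := (hR.1 (j : ℕ)).2
  have h3 := (hR.1 ((j : ℕ) + 1)).1
  have h4 := (hR.1 ((j : ℕ) + 1)).2
  have hw := psum_succ w (j : ℕ) j.isLt
  have hu := psum_succ u (j : ℕ) j.isLt
  rw [Fin.eta] at hw hu
  unfold hrow
  rw [Fin.coe_castSucc, Fin.val_succ]
  omega

lemma wtE_split {m : ℕ} (c2 : Fin (m + 2) → Fin (M + 1) → ℕ) :
    wtE M (m + 1) c2 = wtE M m (Fin.init c2)
      + ∑ j : Fin (M + 1), (j : ℕ) * c2 (Fin.last m).castSucc j := by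
  unfold wtE
  rw [Fin.sum_univ_castSucc (f := fun r : Fin (m + 1) => ∑ j : Fin (M + 1), (j : ℕ) * c2 r.castSucc j)]
  rfl

end TPaux
namespace TPaux

open scoped Classical

variable {M : ℕ}

lemma double_filter_sum {α β : Type*} (s : Finset α) (t : Finset β)
    (A : α → Prop) (B : α → β → Prop) (f : α → β → ℝ) :
    ∑ x ∈ s.filter A, ∑ y ∈ t.filter (B x), f x y
      = ∑ p ∈ (s ×ˢ t).filter (fun p => A p.1 ∧ B p.1 p.2), f p.1 p.2 := by
  rw [Finset.sum_filter, Finset.sum_filter, Finset.sum_product]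
  apply Finset.sum_congr rfl
  intro x _
  by_cases hA : A x
  · rw [if_pos hA, Finset.sum_filter]
    apply Finset.sum_congr rfl
    intro y _
    simp [hA]
  · rw [if_neg hA]
    symm
    apply Finset.sum_eq_zero
    intro y _
    simp [hA]

lemma join_config {m : ℕ} {u w : Fin (M + 1) → ℕ}
    {c' : (Fin m → Fin (M + 2) → ℕ) × (Fin (m + 1) → Fin (M + 1) → ℕ)}
    (hR : RowCond M w u) (hc' : ConfigGen M m w c') :
    ConfigGen M (m + 1) u (Fin.snoc c'.1 (hrow M w u), Fin.snoc c'.2 u) := by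
  refine ⟨?_, ?_, ?_, ?_, ?_, ?_⟩
  · intro r j
    induction r using Fin.lastCases with
    | last =>
      simp only [Fin.snoc_last]
      have h1 : (Fin.last m).castSucc = (Fin.last m).castSucc := rfl
      rw [show ((Fin.last m).succ : Fin (m + 2)) = Fin.last (m + 1) from Fin.succ_last m]
      simp only [Fin.snoc_last]
      rw [show ((Fin.last m).castSucc : Fin (m + 2)) = Fin.castSucc (Fin.last m) from rfl,
        Fin.snoc_castSucc]
      rw [hc'.2.2.2.2.2]
      exact hrow_cons hR j
    | cast r =>
      simp only [Fin.snoc_castSucc]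
      rw [Fin.succ_castSucc r, Fin.snoc_castSucc]
      exact hc'.1 r j
  · intro r j
    induction r using Fin.lastCases with
    | last =>
      simp only [Fin.snoc_last]
      exact hrow_le hR j
    | cast r =>
      simp only [Fin.snoc_castSucc]
      exact hc'.2.1 r j
  · intro r
    induction r using Fin.lastCases with
    | last =>
      simp only [Fin.snoc_last]
      exact hrow_zero
    | cast r =>
      simp only [Fin.snoc_castSucc]
      exact hc'.2.2.1 r
  · intro r
    induction r using Fin.lastCases with
    | last =>
      simp only [Fin.snoc_last]
      exact hrow_last hR
    | cast r =>
      simp only [Fin.snoc_castSucc]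
      exact hc'.2.2.2.1 r
  · intro j
    show (Fin.snoc c'.2 u : Fin (m + 2) → Fin (M + 1) → ℕ) 0 j = 0
    rw [show ((0 : Fin (m + 2))) = Fin.castSucc 0 from (Fin.castSucc_zero).symm,
      Fin.snoc_castSucc]
    exact hc'.2.2.2.2.1 j
  · intro j
    simp only [Fin.snoc_last]

end TPaux
namespace TPaux

open scoped Classical

variable {M : ℕ}

lemma mem_bigC {m : ℕ} {c : (Fin m → Fin (M + 2) → ℕ) × (Fin (m + 1) → Fin (M + 1) → ℕ)} :
    c ∈ bigC M m ↔ (∀ r j, c.1 r j < 2) ∧ (∀ r j, c.2 r j < m + 2) := by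
  unfold bigC
  rw [Finset.mem_product]
  simp only [Fintype.mem_piFinset, Finset.mem_range]

lemma join_mem {m : ℕ} {u w : Fin (M + 1) → ℕ}
    {c' : (Fin m → Fin (M + 2) → ℕ) × (Fin (m + 1) → Fin (M + 1) → ℕ)}
    (hR : RowCond M w u) (hc' : ConfigGen M m w c') (hm' : c' ∈ bigC M m) :
    (Fin.snoc c'.1 (hrow M w u), Fin.snoc c'.2 u) ∈ bigC M (m + 1) := by
  rw [mem_bigC] at hm' ⊢
  have hwtot : psum M w (M + 1) = m := by
    have := level_total hc' (Fin.last m)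
    rw [show c'.2 (Fin.last m) = w from funext hc'.2.2.2.2.2] at this
    simpa using this
  have hutot : psum M u (M + 1) = m + 1 := by
    have := hR.2
    omega
  constructor
  · intro r j
    induction r using Fin.lastCases with
    | last =>
      simp only [Fin.snoc_last]
      have := hrow_le hR j
      omega
    | cast r =>
      simp only [Fin.snoc_castSucc]
      exact hm'.1 r j
  · intro r j
    induction r using Fin.lastCases with
    | last =>
      simp only [Fin.snoc_last]
      have := entry_le_psum u j
      omega
    | cast r =>
      simp only [Fin.snoc_castSucc]
      have := hm'.2 r j
      omega

lemma split_config {m : ℕ} {u : Fin (M + 1) → ℕ}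
    {c : (Fin (m + 1) → Fin (M + 2) → ℕ) × (Fin (m + 2) → Fin (M + 1) → ℕ)}
    (hc : ConfigGen M (m + 1) u c) :
    ConfigGen M m (c.2 (Fin.last m).castSucc) (Fin.init c.1, Fin.init c.2) := by
  refine ⟨?_, ?_, ?_, ?_, ?_, ?_⟩
  · intro r j
    show c.1 r.castSucc j.castSucc + c.2 r.castSucc.castSucc j
      = c.1 r.castSucc j.succ + c.2 r.castSucc.succ j
    have := hc.1 r.castSucc j
    rwa [Fin.succ_castSucc] at this
  · intro r j
    exact hc.2.1 r.castSucc j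
  · intro r
    exact hc.2.2.1 r.castSucc
  · intro r
    exact hc.2.2.2.1 r.castSucc
  · intro j
    show c.2 (Fin.castSucc 0) j = 0
    rw [Fin.castSucc_zero]
    exact hc.2.2.2.2.1 j
  · intro j
    rfl

lemma split_mem {m : ℕ} {u : Fin (M + 1) → ℕ}
    {c : (Fin (m + 1) → Fin (M + 2) → ℕ) × (Fin (m + 2) → Fin (M + 1) → ℕ)}
    (hc : ConfigGen M (m + 1) u c) (hm : c ∈ bigC M (m + 1)) :
    (Fin.init c.1, Fin.init c.2) ∈ bigC M m := by
  rw [mem_bigC] at hm ⊢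
  constructor
  · intro r j
    exact hm.1 r.castSucc j
  · intro r j
    have h1 : c.2 r.castSucc j ≤ psum M (c.2 r.castSucc) (M + 1) := entry_le_psum _ j
    rw [level_total hc r.castSucc] at h1
    have h2 : ((r.castSucc : Fin (m + 2)) : ℕ) ≤ m := by
      have := r.isLt
      simp [Fin.coe_castSucc]
      omega
    show c.2 r.castSucc j < m + 2
    omega

lemma w_mem_pi {m : ℕ} {u : Fin (M + 1) → ℕ}
    {c : (Fin (m + 1) → Fin (M + 2) → ℕ) × (Fin (m + 2) → Fin (M + 1) → ℕ)}
    (hc : ConfigGen M (m + 1) u c) :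
    c.2 (Fin.last m).castSucc ∈ Fintype.piFinset fun _ : Fin (M + 1) => Finset.range (m + 2) := by
  rw [Fintype.mem_piFinset]
  intro j
  rw [Finset.mem_range]
  have h1 := entry_le_psum (c.2 (Fin.last m).castSucc) j
  rw [level_total hc (Fin.last m).castSucc] at h1
  have : ((Fin.last m).castSucc : ℕ) = m := by simp
  omega

lemma peel (q : ℝ) (M m : ℕ) (u : Fin (M + 1) → ℕ) :
    ZC q M (m + 1) u
      = ∑ w ∈ (Fintype.piFinset fun _ : Fin (M + 1) => Finset.range (m + 2)).filter
          (fun w => RowCond M w u),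
          q ^ (∑ j : Fin (M + 1), (j : ℕ) * w j) * ZC q M m w := by
  unfold ZC
  have hstep : ∀ w : Fin (M + 1) → ℕ,
      q ^ (∑ j : Fin (M + 1), (j : ℕ) * w j)
        * ∑ c ∈ (bigC M m).filter (fun c => ConfigGen M m w c), q ^ wtE M m c.2
      = ∑ c ∈ (bigC M m).filter (fun c => ConfigGen M m w c),
          q ^ (∑ j : Fin (M + 1), (j : ℕ) * w j + wtE M m c.2) := by
    intro w
    rw [Finset.mul_sum]
    exact Finset.sum_congr rfl fun c _ => (pow_add q _ _).symm
  rw [Finset.sum_congr rfl fun w _ => hstep w, double_filter_sum]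
  refine Finset.sum_nbij'
    (fun c => (c.2 (Fin.last m).castSucc, (Fin.init c.1, Fin.init c.2)))
    (fun p => (Fin.snoc p.2.1 (hrow M p.1 u), Fin.snoc p.2.2 u))
    ?_ ?_ ?_ ?_ ?_
  · intro c hcm
    rw [Finset.mem_filter] at hcm
    obtain ⟨hm, hc⟩ := hcm
    rw [Finset.mem_filter, Finset.mem_product]
    exact ⟨⟨w_mem_pi hc, split_mem hc hm⟩, split_rowcond hc, split_config hc⟩
  · intro p hp
    rw [Finset.mem_filter, Finset.mem_product] at hp
    obtain ⟨⟨hp1, hp2⟩, hR, hcfg⟩ := hp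
    rw [Finset.mem_filter]
    exact ⟨join_mem hR hcfg hp2, join_config hR hcfg⟩
  · intro c hcm
    rw [Finset.mem_filter] at hcm
    obtain ⟨hm, hc⟩ := hcm
    have hh : hrow M (c.2 (Fin.last m).castSucc) u = c.1 (Fin.last m) :=
      funext fun j => (h_unique hc j).symm
    have e1 : Fin.snoc (Fin.init c.1) (hrow M (c.2 (Fin.last m).castSucc) u) = c.1 := by
      rw [hh]
      exact Fin.snoc_init_self c.1
    have e2 : Fin.snoc (Fin.init c.2) u = c.2 := by
      have : u = c.2 (Fin.last (m + 1)) := funext fun j => (hc.2.2.2.2.2 j).symm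
      rw [this]
      exact Fin.snoc_init_self c.2
    simp only [e1, e2]
  · rintro ⟨w, c1', c2'⟩ hp
    rw [Finset.mem_filter, Finset.mem_product] at hp
    obtain ⟨⟨hp1, hp2⟩, hR, hcfg⟩ := hp
    dsimp only
    rw [show ((Fin.last m).castSucc : Fin (m + 2)) = Fin.castSucc (Fin.last m) from rfl,
      Fin.snoc_castSucc, Fin.init_snoc, Fin.init_snoc]
    rw [show c2' (Fin.last m) = w from funext hcfg.2.2.2.2.2]
  · intro c hcm
    rw [Finset.mem_filter] at hcm
    obtain ⟨hm, hc⟩ := hcm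
    show q ^ wtE M (m + 1) c.2
      = q ^ (∑ j : Fin (M + 1), (j : ℕ) * c.2 (Fin.last m).castSucc j + wtE M m (Fin.init c.2))
    congr 1
    rw [wtE_split c.2]
    omega

end TPaux
namespace TPaux

open scoped Classical

variable {M : ℕ}

lemma ND_det (q : ℝ) (m : ℕ) (μ : ℕ → ℕ) :
    ND q m μ = Matrix.det (Matrix.vandermonde fun i : Fin m => q ^ (μ (i : ℕ) + (i : ℕ))) := by
  rw [Matrix.det_vandermonde]
  exact (prod_Ioi_eq_range (fun s t => q ^ (μ t + t) - q ^ (μ s + s))).symm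

lemma ND_zero_succ (q : ℝ) (m : ℕ) :
    ND q (m + 1) (fun _ => 0)
      = ND q m (fun _ => 0) * (q ^ (m * (m - 1) / 2) * ∏ j ∈ Finset.range m, (q ^ (j + 1) - 1)) := by
  unfold ND
  rw [Finset.prod_range_succ]
  congr 1
  have h1 : ∀ i ∈ Finset.range m, q ^ (0 + m) - q ^ (0 + i) = q ^ i * (q ^ (m - i) - 1) := by
    intro i hi
    rw [Finset.mem_range] at hi
    rw [mul_sub, mul_one, ← pow_add]
    congr 2 <;> omega
  rw [Finset.prod_congr rfl h1, Finset.prod_mul_distrib, Finset.prod_pow_eq_pow_sum]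
  congr 1
  · congr 1
    have := Finset.sum_range_id_mul_two m
    omega
  · rw [← Finset.prod_range_reflect (fun j => q ^ (j + 1) - 1) m]
    apply Finset.prod_congr rfl
    intro i hi
    rw [Finset.mem_range] at hi
    congr 2
    omega

lemma main_ind (q : ℝ) (M : ℕ) : ∀ m : ℕ, ∀ u : Fin (M + 1) → ℕ,
    psum M u (M + 1) = m →
    ZC q M m u * ND q m (fun _ => 0) = ND q m (partsF M u) := by
  intro m
  induction m with
  | zero =>
    intro u hu
    have hu0 : ∀ j, u j = 0 := by
      intro j
      have h1 := entry_le_psum u j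
      omega
    have hset : (bigC M 0).filter (fun c => ConfigGen M 0 u c)
        = {((fun _ _ => 0 : Fin 0 → Fin (M + 2) → ℕ),
            (fun _ _ => 0 : Fin 1 → Fin (M + 1) → ℕ))} := by
      ext c
      simp only [Finset.mem_filter, Finset.mem_singleton]
      constructor
      · rintro ⟨hm, hc⟩
        have h1 : c.1 = fun _ _ => 0 := funext fun r => r.elim0
        have h2 : c.2 = fun _ _ => 0 := by
          funext r j
          have hr : r = 0 := Fin.ext (by omega)
          rw [hr]
          exact hc.2.2.2.2.1 j
        exact Prod.ext h1 h2
      · rintro rfl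
        refine ⟨?_, ?_, ?_, ?_, ?_, ?_, ?_⟩
        · rw [mem_bigC]
          refine ⟨fun r => r.elim0, fun r j => ?_⟩
          show (0 : ℕ) < 0 + 2
          omega
        · intro r
          exact r.elim0
        · intro r
          exact r.elim0
        · intro r
          exact r.elim0
        · intro r
          exact r.elim0
        · intro j
          rfl
        · intro j
          exact (hu0 j).symm
    unfold ZC
    rw [hset, Finset.sum_singleton]
    have hwt : wtE M 0 (fun _ _ => 0 : Fin 1 → Fin (M + 1) → ℕ) = 0 := by
      simp [wtE]
    rw [hwt]
    simp [ND]
  | succ m ih =>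
    intro u hu
    have hbmono : ∀ i : ℕ, partsF M u i ≤ partsF M u (i + 1) :=
      fun i => parts_mono u (by omega)
    have key := branch q m (partsF M u) hbmono
    rw [peel q M m u, ← key]
    rw [ND_zero_succ q m, ← mul_assoc, Finset.sum_mul]
    congr 1
    have hterm : ∀ w ∈ (Fintype.piFinset fun _ : Fin (M + 1) => Finset.range (m + 2)).filter
        (fun w => RowCond M w u),
        q ^ (∑ j : Fin (M + 1), (j : ℕ) * w j) * ZC q M m w * ND q m (fun _ => 0)
          = q ^ (∑ i : Fin m, partsF M w (i : ℕ))
            * Matrix.det (Matrix.vandermonde fun i : Fin m => q ^ (partsF M w (i : ℕ) + (i : ℕ))) := by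
      intro w hw
      rw [Finset.mem_filter] at hw
      obtain ⟨hwm, hR⟩ := hw
      have hwtot : psum M w (M + 1) = m := by
        have := hR.2
        omega
      have hpb : ∀ i : Fin m, partsF M w (i : ℕ) ≤ M :=
        fun i => parts_le w (by have := i.isLt; omega)
      have hexp : ∑ j : Fin (M + 1), (j : ℕ) * w j = ∑ i : Fin m, partsF M w (i : ℕ) := by
        have h1 := wt_prof m (fun i : Fin m => partsF M w (i : ℕ)) hpb
        have h2 : profF M m (fun i : Fin m => partsF M w (i : ℕ)) = w :=
          funext fun j => prof_parts m w hwtot j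
        rw [h2] at h1
        exact h1
      rw [mul_assoc, ih w hwtot, hexp, ND_det q m (partsF M w)]
    rw [Finset.sum_congr rfl hterm]
    refine Finset.sum_nbij' (fun w => fun i : Fin m => partsF M w (i : ℕ))
      (fun ν => profF M m ν) ?_ ?_ ?_ ?_ ?_
    · intro w hw
      rw [Finset.mem_filter] at hw
      rw [Fintype.mem_piFinset]
      intro i
      rw [Finset.mem_Icc]
      exact ⟨(interlace_fwd w u hw.2 (i : ℕ)).1, (interlace_fwd w u hw.2 (i : ℕ)).2⟩
    · intro ν hν
      rw [Fintype.mem_piFinset] at hν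
      have hν' : ∀ i : Fin m, partsF M u (i : ℕ) ≤ ν i ∧ ν i ≤ partsF M u ((i : ℕ) + 1) := by
        intro i
        have := hν i
        rw [Finset.mem_Icc] at this
        exact this
      rw [Finset.mem_filter]
      constructor
      · rw [Fintype.mem_piFinset]
        intro j
        rw [Finset.mem_range]
        have := Finset.card_filter_le (Finset.univ : Finset (Fin m)) (fun i => ν i = (j : ℕ))
        show (Finset.univ.filter (fun i : Fin m => ν i = (j : ℕ))).card < m + 2
        have hcard : (Finset.univ : Finset (Fin m)).card = m := by simp
        omega
      · exact interlace_bwd m u hu ν hν'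
    · intro w hw
      rw [Finset.mem_filter] at hw
      have hwtot : psum M w (M + 1) = m := by
        have := hw.2.2
        omega
      exact funext fun j => prof_parts m w hwtot j
    · intro ν hν
      rw [Fintype.mem_piFinset] at hν
      have hν' : ∀ i : Fin m, partsF M u (i : ℕ) ≤ ν i ∧ ν i ≤ partsF M u ((i : ℕ) + 1) := by
        intro i
        have := hν i
        rw [Finset.mem_Icc] at this
        exact this
      have hbM : ∀ i : Fin m, ν i ≤ M := fun i =>
        le_trans (hν' i).2 (parts_le u (by have := i.isLt; omega))
      have hmono2 : ∀ i1 i2 : Fin m, i1 ≤ i2 → ν i1 ≤ ν i2 := by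
        apply fin_mono_of_succ
        intro i hi
        have h1 := (hν' i).2
        have h2 := (hν' ⟨(i : ℕ) + 1, hi⟩).1
        simp only at h2
        omega
      exact funext fun i => parts_prof m ν hmono2 hbM i
    · intro w hw
      rfl

end TPaux

namespace TPaux

open scoped Classical

lemma config_mem_bigC {M m : ℕ} {u : Fin (M + 1) → ℕ}
    {c : (Fin m → Fin (M + 2) → ℕ) × (Fin (m + 1) → Fin (M + 1) → ℕ)}
    (hc : ConfigGen M m u c) : c ∈ bigC M m := by
  rw [mem_bigC]
  constructor
  · intro r j
    have := hc.2.1 r j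
    omega
  · intro r j
    have h1 := entry_le_psum (c.2 r) j
    rw [level_total hc r] at h1
    have := r.isLt
    omega

lemma prod_pairs_eq_Ioi {m : ℕ} (f : Fin m → Fin m → ℝ) :
    (∏ p ∈ Finset.univ.filter (fun p : Fin m × Fin m => p.1 < p.2), f p.1 p.2)
      = ∏ i : Fin m, ∏ j ∈ Finset.Ioi i, f i j := by
  rw [Finset.prod_sigma' (Finset.univ : Finset (Fin m)) (fun i => Finset.Ioi i)
    (fun i j => f i j)]
  refine (Finset.prod_bij
    (fun (p : Fin m × Fin m) (_ : p ∈ Finset.univ.filter fun p : Fin m × Fin m => p.1 < p.2) =>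
      (⟨p.1, p.2⟩ : Σ _ : Fin m, Fin m)) ?_ ?_ ?_ ?_)
  · intro p hp
    simp only [Finset.mem_filter, Finset.mem_univ, true_and] at hp
    rw [Finset.mem_sigma]
    exact ⟨Finset.mem_univ _, Finset.mem_Ioi.mpr hp⟩
  · rintro ⟨x, y⟩ hp ⟨x', y'⟩ hp' h
    have h1 := congrArg (fun z : Σ _ : Fin m, Fin m => z.1) h
    have h2 := congrArg (fun z : Σ _ : Fin m, Fin m => z.2) h
    simp only at h1 h2
    simp [Prod.ext_iff, h1, h2]
  · rintro ⟨b1, b2⟩ hb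
    rw [Finset.mem_sigma] at hb
    refine ⟨(b1, b2), ?_, rfl⟩
    simp only [Finset.mem_filter, Finset.mem_univ, true_and]
    exact Finset.mem_Ioi.mp hb.2
  · intro p hp
    rfl

end TPaux

open TPaux in
lemma Z_eq_prod (q : ℝ) (n : ℕ) (a : Fin (n + 1) → ℕ) (hmono : StrictMono a) :
    qTouchingZ n a q * TPaux.ND q (n + 1) (fun _ => 0)
      = ∏ p ∈ Finset.univ.filter (fun p : Fin (n + 1) × Fin (n + 1) => p.1 < p.2),
          (q ^ (a p.2 + (p.2 : ℕ)) - q ^ (a p.1 + (p.1 : ℕ))) := by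
  classical
  set M := a (Fin.last n) with hM
  set ua : Fin (M + 1) → ℕ := fun j => if ∃ i, a i = (j : ℕ) then 1 else 0 with hua
  have hbM : ∀ i : Fin (n + 1), a i ≤ M := fun i => hmono.monotone (Fin.le_last i)
  have hua_prof : ua = TPaux.profF M (n + 1) (fun i : Fin (n + 1) => a i) := by
    funext j
    show (if ∃ i, a i = (j : ℕ) then 1 else 0)
      = (Finset.univ.filter (fun i : Fin (n + 1) => a i = (j : ℕ))).card
    by_cases h : ∃ i, a i = (j : ℕ)
    · rw [if_pos h]
      obtain ⟨i0, hi0⟩ := h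
      symm
      rw [Finset.card_eq_one]
      refine ⟨i0, ?_⟩
      ext i
      simp only [Finset.mem_filter, Finset.mem_univ, true_and, Finset.mem_singleton]
      constructor
      · intro hi
        exact hmono.injective (by rw [hi, hi0])
      · rintro rfl
        exact hi0
    · rw [if_neg h]
      symm
      rw [Finset.card_eq_zero, Finset.filter_eq_empty_iff]
      intro i _
      exact fun hc => h ⟨i, hc⟩
  have htot : TPaux.psum M ua (M + 1) = n + 1 := by
    rw [hua_prof, TPaux.psum_prof (n + 1) _ hbM]
    rw [Finset.filter_true_of_mem (fun i _ => by have := hbM i; omega)]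
    simp
  have hZ : qTouchingZ n a q = TPaux.ZC q M (n + 1) ua := by
    unfold qTouchingZ
    rw [finsum_subtype_eq_finsum_cond
      (f := fun c : (Fin (n + 1) → Fin (a (Fin.last n) + 2) → ℕ) ×
          (Fin (n + 2) → Fin (a (Fin.last n) + 1) → ℕ) =>
        q ^ ∑ r : Fin n, ∑ j : Fin (a (Fin.last n) + 1), (j : ℕ) * c.2 r.succ.castSucc j)
      (TouchingConfig n a)]
    rw [finsum_cond_eq_sum_of_cond_iff _
      (t := (TPaux.bigC M (n + 1)).filter (fun c => TPaux.ConfigGen M (n + 1) ua c))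
      (fun {x} _ => ?_)]
    · unfold TPaux.ZC
      apply Finset.sum_congr rfl
      intro c hc
      rw [Finset.mem_filter] at hc
      congr 1
      unfold TPaux.wtE
      rw [Fin.sum_univ_succ
        (f := fun r : Fin (n + 1) => ∑ j : Fin (M + 1), (j : ℕ) * c.2 r.castSucc j)]
      have h0 : (∑ j : Fin (M + 1), (j : ℕ) * c.2 ((0 : Fin (n + 1)).castSucc) j) = 0 := by
        rw [Fin.castSucc_zero]
        apply Finset.sum_eq_zero
        intro j _
        rw [hc.2.2.2.2.2.1 j, mul_zero]
      rw [h0, zero_add]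
    · constructor
      · intro hT
        have hC : TPaux.ConfigGen M (n + 1) ua x :=
          ⟨hT.1, hT.2.1, hT.2.2.1, hT.2.2.2.1, hT.2.2.2.2.1, hT.2.2.2.2.2⟩
        rw [Finset.mem_filter]
        exact ⟨TPaux.config_mem_bigC hC, hC⟩
      · intro hx
        rw [Finset.mem_filter] at hx
        obtain ⟨-, hC⟩ := hx
        exact ⟨hC.1, hC.2.1, hC.2.2.1, hC.2.2.2.1, hC.2.2.2.2.1, hC.2.2.2.2.2⟩
  have hmain := TPaux.main_ind q M (n + 1) ua htot
  have hparts : ∀ i : Fin (n + 1), TPaux.partsF M ua (i : ℕ) = a i := by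
    intro i
    rw [hua_prof]
    exact TPaux.parts_prof (n + 1) _ (fun i1 i2 h12 => hmono.monotone h12) hbM i
  have hprod : (∏ p ∈ Finset.univ.filter (fun p : Fin (n + 1) × Fin (n + 1) => p.1 < p.2),
      (q ^ (a p.2 + (p.2 : ℕ)) - q ^ (a p.1 + (p.1 : ℕ))))
      = TPaux.ND q (n + 1) (TPaux.partsF M ua) := by
    rw [TPaux.prod_pairs_eq_Ioi (fun i j : Fin (n + 1) =>
      q ^ (a j + (j : ℕ)) - q ^ (a i + (i : ℕ)))]
    have hcg : ∀ i : Fin (n + 1), ∀ j ∈ Finset.Ioi i,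
        q ^ (a j + (j : ℕ)) - q ^ (a i + (i : ℕ))
          = (fun s t : ℕ => q ^ (TPaux.partsF M ua t + t) - q ^ (TPaux.partsF M ua s + s))
              (i : ℕ) (j : ℕ) := by
      intro i j _
      simp only
      rw [hparts i, hparts j]
    rw [Finset.prod_congr rfl (fun i _ => Finset.prod_congr rfl (hcg i))]
    exact TPaux.prod_Ioi_eq_range
      (fun s t : ℕ => q ^ (TPaux.partsF M ua t + t) - q ^ (TPaux.partsF M ua s + s))
  rw [hZ, hmain]
  exact hprod.symm

/-- `W(a; q) · Δ(q^{a'_0}, q^{a'_1+1}, …, q^{a'_n+n}) = W(a'; q) · Δ(q^{a_0}, …, q^{a_n+n})`;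
equivalently, `W(a; q) = q^{c_n} Δ(q^{a_0}, q^{a_1+1}, …, q^{a_n+n}) / Δ(1, q, …, q^n)`
with `c_n` independent of the `a_i`. -/
theorem qTouchingZ_vandermonde_ratio (q : ℝ) (hq : 0 < q) (n : ℕ)
    (a a' : Fin (n + 1) → ℕ) (ha0 : a 0 = 0) (hmono : StrictMono a)
    (ha0' : a' 0 = 0) (hmono' : StrictMono a') :
    qTouchingZ n a q *
      (∏ p ∈ Finset.univ.filter (fun p : Fin (n + 1) × Fin (n + 1) => p.1 < p.2),
        (q ^ (a' p.2 + (p.2 : ℕ)) - q ^ (a' p.1 + (p.1 : ℕ)))) =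
    qTouchingZ n a' q *
      (∏ p ∈ Finset.univ.filter (fun p : Fin (n + 1) × Fin (n + 1) => p.1 < p.2),
        (q ^ (a p.2 + (p.2 : ℕ)) - q ^ (a p.1 + (p.1 : ℕ)))) := by
  have h1 := Z_eq_prod q n a hmono
  have h2 := Z_eq_prod q n a' hmono'
  rw [← h1, ← h2]
  ring
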